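/- Let (T(t))_{t≥0} be a C₀-semigroup on a Banach space X with generator A, and define ‖x‖₁ = sup{|⟨x, x*⟩| : x* ∈ D(A*), ‖x*‖ ≤ 1}. Then ‖·‖₁ is an equivalent norm on X satisfying ‖x‖₁ ≤ ‖x‖ ≤ α‖x‖₁ for all x ∈ X, where α = limsup_{t→0} ‖T(t)‖. Moreover, D(A*) is a norming set for (X, ‖·‖₁). -/

import Mathlib

open Pointwise

set_option maxHeartbeats 1000000 in
/-- The norm `‖x‖₁ = sup{|⟨x,x*⟩| : x* ∈ D(A*), ‖x*‖ ≤ 1}` is an equivalent norm with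
`‖x‖₁ ≤ ‖x‖ ≤ α‖x‖₁`, where `α = limsup_{t→0⁺} ‖T(t)‖`, and `D(A*)` is a norming set
for `(X, ‖·‖₁)`. -/
theorem stmt_16 (X : Type*) [NormedAddCommGroup X] [NormedSpace ℂ X] [CompleteSpace X]
    (T : ℝ → X →L[ℂ] X) (hT0 : T 0 = 1)
    (hTadd : ∀ s t : ℝ, 0 ≤ s → 0 ≤ t → T (s + t) = (T s).comp (T t))
    (hTcont : ∀ x : X, ContinuousOn (fun t => T t x) (Set.Ici 0))
    (A : X →ₗ.[ℂ] X)
    (hgen : ∀ (x y : X), (∃ hx : x ∈ A.domain, A ⟨x, hx⟩ = y) ↔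
      Filter.Tendsto (fun t : ℝ => t⁻¹ • ((T t) x - x))
        (nhdsWithin 0 (Set.Ioi 0)) (nhds y))
    (Dstar : Set (X →L[ℂ] ℂ))
    (hDstar : Dstar = {y : X →L[ℂ] ℂ | ∃ z : X →L[ℂ] ℂ, ∀ v : A.domain, z (v : X) = y (A v)})
    (N : X → ℝ)
    (hN : ∀ x : X, N x = sSup {r : ℝ | ∃ y ∈ Dstar, ‖y‖ ≤ 1 ∧ r = ‖y x‖})
    (α : ℝ)
    (hα : α = Filter.limsup (fun t => ‖T t‖) (nhdsWithin 0 (Set.Ioi 0))) :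
    (∀ x : X, N x ≤ ‖x‖ ∧ ‖x‖ ≤ α * N x) ∧
    (∀ x y : X, N (x + y) ≤ N x + N y) ∧
    (∀ (c : ℂ) (x : X), N (c • x) = ‖c‖ * N x) ∧
    (∀ x : X, N x = 0 → x = 0) ∧
    (∀ x : X, N x = sSup {r : ℝ | ∃ y ∈ Dstar, y ≠ 0 ∧
      r = ‖y x‖ / sSup {s : ℝ | ∃ z : X, N z ≤ 1 ∧ s = ‖y z‖}}) := by
  -- basic facts about Dstar
  have h0D : (0 : X →L[ℂ] ℂ) ∈ Dstar := by
    rw [hDstar]; exact ⟨0, fun v => by simp⟩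
  have hsmulD : ∀ (c : ℂ) (y : X →L[ℂ] ℂ), y ∈ Dstar → c • y ∈ Dstar := by
    intro c y hy
    rw [hDstar] at hy ⊢
    obtain ⟨z, hz⟩ := hy
    exact ⟨c • z, fun v => by simp [hz v]⟩
  -- basic facts about the set defining N
  set S : X → Set ℝ := fun x => {r : ℝ | ∃ y ∈ Dstar, ‖y‖ ≤ 1 ∧ r = ‖y x‖} with hS
  have h0S : ∀ x, (0 : ℝ) ∈ S x := fun x => ⟨0, h0D, by simp⟩
  have hbddS : ∀ x, ∀ r ∈ S x, r ≤ ‖x‖ := by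
    rintro x r ⟨y, hy, hy1, rfl⟩
    calc ‖y x‖ ≤ ‖y‖ * ‖x‖ := y.le_opNorm x
    _ ≤ 1 * ‖x‖ := by gcongr
    _ = ‖x‖ := one_mul _
  have hbddS' : ∀ x, BddAbove (S x) := fun x => ⟨‖x‖, fun r hr => hbddS x r hr⟩
  have hNle : ∀ x, N x ≤ ‖x‖ := fun x => by
    rw [hN]; exact csSup_le ⟨0, h0S x⟩ (hbddS x)
  have hN0 : ∀ x, 0 ≤ N x := fun x => by
    rw [hN]; exact le_csSup (hbddS' x) (h0S x)
  have hmem : ∀ x (y : X →L[ℂ] ℂ), y ∈ Dstar → ‖y‖ ≤ 1 → ‖y x‖ ≤ N x := by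
    intro x y hy hy1
    rw [hN]; exact le_csSup (hbddS' x) ⟨y, hy, hy1, rfl⟩
  -- subadditivity
  have hadd : ∀ x y : X, N (x + y) ≤ N x + N y := by
    intro x y
    rw [hN (x + y)]
    refine csSup_le ⟨0, h0S _⟩ ?_
    rintro r ⟨g, hg, hg1, rfl⟩
    calc ‖g (x + y)‖ ≤ ‖g x‖ + ‖g y‖ := by rw [map_add]; exact norm_add_le _ _
    _ ≤ N x + N y := add_le_add (hmem x g hg hg1) (hmem y g hg hg1)
  -- homogeneity
  have hsmul : ∀ (c : ℂ) (x : X), N (c • x) = ‖c‖ * N x := by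
    intro c x
    rcases eq_or_ne c 0 with rfl | hc
    · simp only [zero_smul, norm_zero, zero_mul]
      refine le_antisymm ?_ (hN0 0)
      rw [hN]; refine csSup_le ⟨0, h0S _⟩ ?_
      rintro r ⟨g, hg, hg1, rfl⟩; simp
    · have him : S (c • x) = ‖c‖ • S x := by
        ext r
        simp only [Set.mem_smul_set, smul_eq_mul, hS, Set.mem_setOf_eq]
        constructor
        · rintro ⟨g, hg, hg1, rfl⟩
          exact ⟨‖g x‖, ⟨g, hg, hg1, rfl⟩, by simp [norm_smul, mul_comm]⟩
        · rintro ⟨r, ⟨g, hg, hg1, rfl⟩, rfl⟩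
          exact ⟨g, hg, hg1, by simp [norm_smul, mul_comm]⟩
      rw [hN, hN]
      rw [show {r : ℝ | ∃ y ∈ Dstar, ‖y‖ ≤ 1 ∧ r = ‖y (c • x)‖} = S (c • x) from rfl,
        show {r : ℝ | ∃ y ∈ Dstar, ‖y‖ ≤ 1 ∧ r = ‖y x‖} = S x from rfl,
        him, Real.sSup_smul_of_nonneg (norm_nonneg c), smul_eq_mul]
  -- the key inequality ‖x‖ ≤ α * N x
  have hkey : ∀ x : X, ‖x‖ ≤ α * N x := by
    rcases subsingleton_or_nontrivial X with hX | hX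
    · intro x
      have hx0 : x = 0 := Subsingleton.elim x 0
      have hT : (fun t : ℝ => ‖T t‖) = fun _ => (0 : ℝ) := by
        funext t; rw [Subsingleton.elim (T t) 0, norm_zero]
      have hα' : α = 0 := by rw [hα, hT, Filter.limsup_const]
      rw [hx0, hα', norm_zero, zero_mul]
    -- nontrivial case
    -- uniform bound on [0,1]
    have hMex : ∃ M : ℝ, 1 ≤ M ∧ ∀ s : ℝ, 0 ≤ s → s ≤ 1 → ‖T s‖ ≤ M := by
      have h1 : ∀ x : X, ∃ C, ∀ i : Set.Icc (0:ℝ) 1, ‖T i x‖ ≤ C := by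
        intro x
        obtain ⟨C, hC⟩ := (isCompact_Icc (a := (0:ℝ)) (b := 1)).exists_bound_of_continuousOn
          ((hTcont x).mono (fun s hs => hs.1))
        exact ⟨C, fun i => hC i i.2⟩
      obtain ⟨C, hC⟩ := banach_steinhaus (g := fun i : Set.Icc (0:ℝ) 1 => T i) h1
      exact ⟨max C 1, le_max_right _ _, fun s h0 h1' =>
        le_trans (hC ⟨s, h0, h1'⟩) (le_max_left _ _)⟩
    obtain ⟨M, hM1, hMle⟩ := hMex
    have hbound : Filter.IsBoundedUnder (· ≤ ·) (nhdsWithin 0 (Set.Ioi 0))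
        (fun t : ℝ => ‖T t‖) := by
      refine ⟨M, Filter.eventually_map.mpr ?_⟩
      filter_upwards [Ioo_mem_nhdsGT_of_mem (Set.left_mem_Ico.mpr one_pos)] with t ht
      exact hMle t ht.1.le ht.2.le
    have hα0 : 0 ≤ α := by
      rw [hα]
      exact Filter.le_limsup_of_frequently_le
        (Filter.Frequently.of_forall (fun t => norm_nonneg _)) hbound
    -- the generator limit
    have hAv : ∀ v : A.domain, Filter.Tendsto (fun t : ℝ => t⁻¹ • (T t (v : X) - (v : X)))
        (nhdsWithin 0 (Set.Ioi 0)) (nhds (A v)) := fun v => (hgen v (A v)).mp ⟨v.2, rfl⟩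
    -- right derivative of the orbit map
    have hderiv : ∀ (v : A.domain) (s : ℝ), 0 ≤ s →
        HasDerivWithinAt (fun u : ℝ => T u (v : X)) (T s (A v)) (Set.Ioi s) s := by
      intro v s hs
      rw [hasDerivWithinAt_iff_tendsto_slope]
      have hd1 : Set.Ioi s \ {s} = Set.Ioi s :=
        Set.diff_singleton_eq_self (fun h => lt_irrefl s (Set.mem_Ioi.mp h))
      rw [hd1]
      have hsub : Filter.Tendsto (fun u : ℝ => u - s) (nhdsWithin s (Set.Ioi s))
          (nhdsWithin 0 (Set.Ioi 0)) := by
        apply tendsto_nhdsWithin_of_tendsto_nhds_of_eventually_within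
        · have : Filter.Tendsto (fun u : ℝ => u - s) (nhds s) (nhds (s - s)) :=
            (continuous_id.sub continuous_const).tendsto s
          rw [sub_self] at this
          exact this.mono_left nhdsWithin_le_nhds
        · filter_upwards [self_mem_nhdsWithin] with u hu
          exact sub_pos.mpr (Set.mem_Ioi.mp hu)
      have hc := ((T s).continuous.tendsto (A v)).comp ((hAv v).comp hsub)
      refine hc.congr' ?_
      filter_upwards [self_mem_nhdsWithin] with u hu
      have hus : (0:ℝ) < u - s := sub_pos.mpr hu
      have hTu : T u = (T s).comp (T (u - s)) := by
        rw [← hTadd s (u - s) hs hus.le]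
        congr 1; ring
      show T s ((u - s)⁻¹ • (T (u - s) (v : X) - (v : X))) = slope (fun u : ℝ => T u (v : X)) s u
      rw [slope_def_module, (T s).map_smul_of_tower, map_sub, hTu]
      rfl
    -- FTC for the orbit of domain elements
    have hFTC : ∀ (v : A.domain) (g : X →L[ℂ] ℂ) (t : ℝ), 0 ≤ t →
        (∫ s in (0:ℝ)..t, g (T s (A v))) = g (T t (v : X)) - g (v : X) := by
      intro v g t ht
      have h := intervalIntegral.integral_eq_sub_of_hasDeriv_right_of_le ht
        (f := fun u : ℝ => g (T u (v : X))) (f' := fun u : ℝ => g (T u (A v)))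
        (g.continuous.comp_continuousOn ((hTcont (v : X)).mono (fun s hs => hs.1)))
        (fun u hu => ((g.restrictScalars ℝ).hasFDerivAt.comp_hasDerivWithinAt u
          (hderiv v u hu.1.le)))
        ((g.continuous.comp_continuousOn ((hTcont (A v)).mono (fun s hs => hs.1))).intervalIntegrable_of_Icc ht)
      rw [h]
      simp [hT0]
    -- integrability helper
    have hcg : ∀ (g : X →L[ℂ] ℂ) (x : X) (t : ℝ), 0 ≤ t →
        IntervalIntegrable (fun s => g (T s x)) MeasureTheory.volume 0 t := fun g x t ht =>
      (g.continuous.comp_continuousOn ((hTcont x).mono (fun s hs => hs.1))).intervalIntegrable_of_Icc ht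
    -- the averaged functional
    have hphi : ∀ (g : X →L[ℂ] ℂ) (t : ℝ), 0 < t → t ≤ 1 →
        ∃ φ : X →L[ℂ] ℂ, ∀ x : X, φ x = ((t : ℂ))⁻¹ * ∫ s in (0:ℝ)..t, g (T s x) := by
      intro g t ht ht1
      refine ⟨LinearMap.mkContinuous
        { toFun := fun x => ((t : ℂ))⁻¹ * ∫ s in (0:ℝ)..t, g (T s x)
          map_add' := ?_
          map_smul' := ?_ } (‖g‖ * M) ?_, fun x => rfl⟩
      · intro x y
        have heq : (fun s => g (T s (x + y))) = fun s => g (T s x) + g (T s y) := by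
          funext s; rw [map_add, map_add]
        rw [heq, intervalIntegral.integral_add (hcg g x t ht.le) (hcg g y t ht.le), mul_add]
      · intro c x
        have heq : (fun s => g (T s (c • x))) = fun s => c • g (T s x) := by
          funext s; rw [map_smul, map_smul]
        rw [heq, intervalIntegral.integral_smul]
        simp only [RingHom.id_apply, smul_eq_mul]
        ring
      · intro x
        have hb : ∀ s ∈ Set.uIoc (0:ℝ) t, ‖g (T s x)‖ ≤ ‖g‖ * M * ‖x‖ := by
          intro s hs
          rw [Set.uIoc_of_le ht.le] at hs
          calc ‖g (T s x)‖ ≤ ‖g‖ * ‖T s x‖ := g.le_opNorm _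
          _ ≤ ‖g‖ * (‖T s‖ * ‖x‖) := by gcongr; exact (T s).le_opNorm x
          _ ≤ ‖g‖ * (M * ‖x‖) := by
              gcongr
              exact hMle s hs.1.le (hs.2.trans ht1)
          _ = ‖g‖ * M * ‖x‖ := by ring
        have hni := intervalIntegral.norm_integral_le_of_norm_le_const hb
        calc ‖((t:ℂ))⁻¹ * ∫ s in (0:ℝ)..t, g (T s x)‖
            = t⁻¹ * ‖∫ s in (0:ℝ)..t, g (T s x)‖ := by
              rw [norm_mul, norm_inv, Complex.norm_real, Real.norm_eq_abs, abs_of_pos ht]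
        _ ≤ t⁻¹ * (‖g‖ * M * ‖x‖ * |t - 0|) := by
              gcongr
        _ = ‖g‖ * M * ‖x‖ := by
              rw [sub_zero, abs_of_pos ht]
              field_simp
    -- convergence of the average to the value at 0
    have hconv : ∀ (g : X →L[ℂ] ℂ) (x : X) (ε : ℝ), 0 < ε → ∃ t₁ > (0:ℝ), ∀ t : ℝ, 0 < t → t < t₁ →
        ‖((t:ℂ))⁻¹ * (∫ s in (0:ℝ)..t, g (T s x)) - g x‖ ≤ ε := by
      intro g x ε hε
      have hc : ContinuousWithinAt (fun s : ℝ => g (T s x)) (Set.Ici 0) 0 :=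
        (g.continuous.comp_continuousOn (hTcont x)) 0 Set.self_mem_Ici
      obtain ⟨δ, hδ, hδ'⟩ := Metric.continuousWithinAt_iff.mp hc ε hε
      refine ⟨δ, hδ, fun t ht htδ => ?_⟩
      have hkeyb : ∀ s ∈ Set.uIoc (0:ℝ) t, ‖g (T s x) - g x‖ ≤ ε := by
        intro s hs
        rw [Set.uIoc_of_le ht.le] at hs
        have hds : dist s (0:ℝ) < δ := by
          rw [Real.dist_eq, sub_zero, abs_of_pos hs.1]
          exact lt_of_le_of_lt hs.2 htδ
        have := hδ' (Set.mem_Ici.mpr hs.1.le) hds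
        rw [dist_eq_norm] at this
        have h0 : g (T (0:ℝ) x) = g x := by rw [hT0]; rfl
        rw [h0] at this
        exact this.le
      have hsplit : (∫ s in (0:ℝ)..t, (g (T s x) - g x)) =
          (∫ s in (0:ℝ)..t, g (T s x)) - t • (g x) := by
        rw [intervalIntegral.integral_sub (hcg g x t ht.le) intervalIntegrable_const,
          intervalIntegral.integral_const]
        simp
      have hni := intervalIntegral.norm_integral_le_of_norm_le_const hkeyb
      rw [hsplit] at hni
      have htne : ((t:ℂ)) ≠ 0 := by
        simp only [ne_eq, Complex.ofReal_eq_zero]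
        exact ht.ne'
      have heq2 : ((t:ℂ))⁻¹ * (∫ s in (0:ℝ)..t, g (T s x)) - g x
          = ((t:ℂ))⁻¹ * ((∫ s in (0:ℝ)..t, g (T s x)) - t • (g x)) := by
        rw [mul_sub]
        congr 1
        rw [Complex.real_smul, ← mul_assoc, inv_mul_cancel₀ htne, one_mul]
      rw [heq2]
      calc ‖((t:ℂ))⁻¹ * ((∫ s in (0:ℝ)..t, g (T s x)) - t • (g x))‖
          = t⁻¹ * ‖(∫ s in (0:ℝ)..t, g (T s x)) - t • (g x)‖ := by
            rw [norm_mul, norm_inv, Complex.norm_real, Real.norm_eq_abs, abs_of_pos ht]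
      _ ≤ t⁻¹ * (ε * |t - 0|) := by
            gcongr
      _ = ε := by
            rw [sub_zero, abs_of_pos ht]
            field_simp
    -- main estimate
    intro x
    rcases eq_or_ne x 0 with rfl | hx
    · rw [norm_zero]
      exact mul_nonneg hα0 (hN0 0)
    have main : ∀ ε : ℝ, 0 < ε → ‖x‖ ≤ (α + ε) * N x + ε := by
      intro ε hε
      obtain ⟨g, hg1, hgx⟩ := exists_dual_vector ℂ x (norm_ne_zero_iff.mpr hx)
      have hαε : (0:ℝ) < α + ε := by linarith
      have hev : ∀ᶠ t in nhdsWithin 0 (Set.Ioi 0), ‖T t‖ < α + ε :=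
        Filter.eventually_lt_of_limsup_lt (by rw [← hα]; linarith) hbound
      obtain ⟨t₀, ht₀, ht₀'⟩ := mem_nhdsGT_iff_exists_Ioo_subset.mp hev
      obtain ⟨t₁, ht₁, ht₁'⟩ := hconv g x ε hε
      set t : ℝ := min 1 (min t₀ t₁) / 2 with htdef
      have ht0pos : (0:ℝ) < t₀ := ht₀
      have htpos : 0 < t := by positivity
      have htle1 : t ≤ 1 := by
        have : min 1 (min t₀ t₁) ≤ 1 := min_le_left _ _
        linarith
      have htlt0 : t < t₀ := by
        have h1 : min 1 (min t₀ t₁) ≤ min t₀ t₁ := min_le_right _ _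
        have h2 : min t₀ t₁ ≤ t₀ := min_le_left _ _
        have h3 : min 1 (min t₀ t₁) > 0 := by positivity
        rw [htdef]; linarith
      have htlt1 : t < t₁ := by
        have h1 : min 1 (min t₀ t₁) ≤ min t₀ t₁ := min_le_right _ _
        have h2 : min t₀ t₁ ≤ t₁ := min_le_right _ _
        have h3 : min 1 (min t₀ t₁) > 0 := by positivity
        rw [htdef]; linarith
      obtain ⟨φ, hφ⟩ := hphi g t htpos htle1
      -- φ belongs to Dstar
      have hφD : φ ∈ Dstar := by
        rw [hDstar]
        refine ⟨((t:ℂ))⁻¹ • (g.comp (T t) - g), fun v => ?_⟩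
        rw [hφ (A v), hFTC v g t htpos.le]
        simp only [ContinuousLinearMap.smul_apply, ContinuousLinearMap.sub_apply,
          ContinuousLinearMap.comp_apply, smul_eq_mul]
      -- norm bound for φ
      have hφnorm : ‖φ‖ ≤ α + ε := by
        refine ContinuousLinearMap.opNorm_le_bound _ hαε.le (fun y => ?_)
        rw [hφ]
        have hb : ∀ s ∈ Set.uIoc (0:ℝ) t, ‖g (T s y)‖ ≤ (α + ε) * ‖y‖ := by
          intro s hs
          rw [Set.uIoc_of_le htpos.le] at hs
          have hsT : ‖T s‖ < α + ε := ht₀' ⟨hs.1, lt_of_le_of_lt hs.2 htlt0⟩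
          calc ‖g (T s y)‖ ≤ ‖g‖ * ‖T s y‖ := g.le_opNorm _
          _ ≤ 1 * (‖T s‖ * ‖y‖) := by
              rw [hg1]
              gcongr
              exact (T s).le_opNorm y
          _ ≤ 1 * ((α + ε) * ‖y‖) := by gcongr
          _ = (α + ε) * ‖y‖ := one_mul _
        have hni := intervalIntegral.norm_integral_le_of_norm_le_const hb
        calc ‖((t:ℂ))⁻¹ * ∫ s in (0:ℝ)..t, g (T s y)‖
            = t⁻¹ * ‖∫ s in (0:ℝ)..t, g (T s y)‖ := by
              rw [norm_mul, norm_inv, Complex.norm_real, Real.norm_eq_abs, abs_of_pos htpos]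
        _ ≤ t⁻¹ * ((α + ε) * ‖y‖ * |t - 0|) := by
              gcongr
        _ = (α + ε) * ‖y‖ := by
              rw [sub_zero, abs_of_pos htpos]
              field_simp
      -- value estimate
      have hval : ‖x‖ - ε ≤ ‖φ x‖ := by
        have h1 : ‖φ x - g x‖ ≤ ε := by
          rw [hφ]
          exact ht₁' t htpos htlt1
        have h2 : ‖g x‖ = ‖x‖ := by
          rw [hgx]; simp
        have h3 : ‖g x‖ - ‖φ x‖ ≤ ‖g x - φ x‖ := norm_sub_norm_le _ _
        rw [norm_sub_rev] at h3
        linarith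
      -- N x estimate
      have hNge : (α + ε)⁻¹ * ‖φ x‖ ≤ N x := by
        have hsc : (((α + ε : ℝ) : ℂ))⁻¹ • φ ∈ Dstar := hsmulD _ _ hφD
        have hn1 : ‖(((α + ε : ℝ) : ℂ))⁻¹ • φ‖ ≤ 1 := by
          rw [norm_smul ((((α + ε : ℝ) : ℂ))⁻¹) φ, norm_inv, Complex.norm_real,
            Real.norm_eq_abs, abs_of_pos hαε, inv_mul_le_iff₀ hαε, mul_one]
          exact hφnorm
        have := hmem x _ hsc hn1
        rwa [ContinuousLinearMap.smul_apply, norm_smul ((((α + ε : ℝ) : ℂ))⁻¹) (φ x),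
          norm_inv, Complex.norm_real, Real.norm_eq_abs, abs_of_pos hαε] at this
      have hφxle : ‖φ x‖ ≤ (α + ε) * N x := by
        have := mul_le_mul_of_nonneg_left hNge hαε.le
        rwa [← mul_assoc, mul_inv_cancel₀ hαε.ne', one_mul] at this
      linarith
    refine le_of_forall_pos_le_add (fun ε' hε' => ?_)
    have hd : (0:ℝ) < N x + 1 := by linarith [hN0 x]
    have hm := main (ε' / (N x + 1)) (by positivity)
    have : (α + ε' / (N x + 1)) * N x + ε' / (N x + 1) = α * N x + ε' := by
      field_simp
      ring
    linarith [this ▸ hm]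
  -- part 4
  have hzero : ∀ x : X, N x = 0 → x = 0 := by
    intro x hx
    have := hkey x
    rw [hx, mul_zero] at this
    exact norm_le_zero_iff.mp this
  -- part 5
  have hyN : ∀ y ∈ Dstar, ∀ z : X, ‖y z‖ ≤ ‖y‖ * N z := by
    intro y hy z
    rcases eq_or_ne y 0 with rfl | hy0
    · simp
    have hny : (0:ℝ) < ‖y‖ := norm_pos_iff.mpr hy0
    have hsc : (((‖y‖ : ℝ) : ℂ))⁻¹ • y ∈ Dstar := hsmulD _ _ hy
    have hn1 : ‖(((‖y‖ : ℝ) : ℂ))⁻¹ • y‖ ≤ 1 := by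
      rw [norm_smul ((((‖y‖ : ℝ) : ℂ))⁻¹) y, norm_inv, Complex.norm_real,
        Real.norm_eq_abs, abs_of_pos hny, inv_mul_cancel₀ hny.ne']
    have := hmem z _ hsc hn1
    rw [ContinuousLinearMap.smul_apply, norm_smul ((((‖y‖ : ℝ) : ℂ))⁻¹) (y z),
      norm_inv, Complex.norm_real, Real.norm_eq_abs, abs_of_pos hny] at this
    calc ‖y z‖ = ‖y‖ * (‖y‖⁻¹ * ‖y z‖) := by field_simp
    _ ≤ ‖y‖ * N z := by gcongr
  have hSy : ∀ y ∈ Dstar, sSup {s : ℝ | ∃ z : X, N z ≤ 1 ∧ s = ‖y z‖} = ‖y‖ := by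
    intro y hy
    set Q : Set ℝ := {s : ℝ | ∃ z : X, N z ≤ 1 ∧ s = ‖y z‖} with hQ
    have h0Q : (0:ℝ) ∈ Q := ⟨0, by
      constructor
      · calc N 0 ≤ ‖(0:X)‖ := hNle 0
        _ = 0 := norm_zero
        _ ≤ 1 := zero_le_one
      · simp⟩
    have hbQ : ∀ s ∈ Q, s ≤ ‖y‖ := by
      rintro s ⟨z, hz, rfl⟩
      calc ‖y z‖ ≤ ‖y‖ * N z := hyN y hy z
      _ ≤ ‖y‖ * 1 := by
        have := norm_nonneg y
        nlinarith
      _ = ‖y‖ := mul_one _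
    have hbQ' : BddAbove Q := ⟨‖y‖, hbQ⟩
    refine le_antisymm (csSup_le ⟨0, h0Q⟩ hbQ) ?_
    refine ContinuousLinearMap.opNorm_le_bound _ (le_csSup hbQ' h0Q) (fun z => ?_)
    rcases eq_or_ne z 0 with rfl | hz0
    · simp
    have hnz : (0:ℝ) < ‖z‖ := norm_pos_iff.mpr hz0
    have hw : N ((((‖z‖ : ℝ) : ℂ))⁻¹ • z) ≤ 1 := by
      rw [hsmul, norm_inv, Complex.norm_real, Real.norm_eq_abs, abs_of_pos hnz,
        inv_mul_le_iff₀ hnz, mul_one]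
      exact hNle z
    have hmemQ : ‖y ((((‖z‖ : ℝ) : ℂ))⁻¹ • z)‖ ∈ Q := ⟨_, hw, rfl⟩
    have hle := le_csSup hbQ' hmemQ
    rw [map_smul, norm_smul ((((‖z‖ : ℝ) : ℂ))⁻¹) (y z), norm_inv, Complex.norm_real,
      Real.norm_eq_abs, abs_of_pos hnz] at hle
    calc ‖y z‖ = ‖z‖ * (‖z‖⁻¹ * ‖y z‖) := by field_simp
    _ ≤ ‖z‖ * sSup Q := by gcongr
    _ = sSup Q * ‖z‖ := mul_comm _ _
  have hlast : ∀ x : X, N x = sSup {r : ℝ | ∃ y ∈ Dstar, y ≠ 0 ∧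
      r = ‖y x‖ / sSup {s : ℝ | ∃ z : X, N z ≤ 1 ∧ s = ‖y z‖}} := by
    intro x
    set R : Set ℝ := {r : ℝ | ∃ y ∈ Dstar, y ≠ 0 ∧
      r = ‖y x‖ / sSup {s : ℝ | ∃ z : X, N z ≤ 1 ∧ s = ‖y z‖}} with hR
    have hRbdd : ∀ r ∈ R, r ≤ N x := by
      rintro r ⟨y, hy, hy0, rfl⟩
      rw [hSy y hy]
      rw [div_le_iff₀ (norm_pos_iff.mpr hy0)]
      calc ‖y x‖ ≤ ‖y‖ * N x := hyN y hy x
      _ = N x * ‖y‖ := mul_comm _ _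
    by_cases hD : ∃ y ∈ Dstar, y ≠ 0
    · obtain ⟨y₀, hy₀, hy₀0⟩ := hD
      have hRne : R.Nonempty := ⟨_, y₀, hy₀, hy₀0, rfl⟩
      have hRbdd' : BddAbove R := ⟨N x, hRbdd⟩
      have hR0 : (0:ℝ) ≤ sSup R := by
        have hmem0 : ‖y₀ x‖ / sSup {s : ℝ | ∃ z : X, N z ≤ 1 ∧ s = ‖y₀ z‖} ∈ R :=
          ⟨y₀, hy₀, hy₀0, rfl⟩
        have hnn : (0:ℝ) ≤ ‖y₀ x‖ / sSup {s : ℝ | ∃ z : X, N z ≤ 1 ∧ s = ‖y₀ z‖} := by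
          rw [hSy y₀ hy₀]
          positivity
        exact hnn.trans (le_csSup hRbdd' hmem0)
      refine le_antisymm ?_ (csSup_le hRne hRbdd)
      rw [hN]
      refine csSup_le ⟨0, h0S x⟩ ?_
      rintro r ⟨y, hy, hy1, rfl⟩
      rcases eq_or_ne y 0 with rfl | hyne
      · simpa using hR0
      have hny : (0:ℝ) < ‖y‖ := norm_pos_iff.mpr hyne
      have hmemR : ‖y x‖ / sSup {s : ℝ | ∃ z : X, N z ≤ 1 ∧ s = ‖y z‖} ∈ R :=
        ⟨y, hy, hyne, rfl⟩
      have h1 : ‖y x‖ ≤ ‖y x‖ / ‖y‖ := by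
        rw [le_div_iff₀ hny]
        calc ‖y x‖ * ‖y‖ ≤ ‖y x‖ * 1 := by gcongr
        _ = ‖y x‖ := mul_one _
      calc ‖y x‖ ≤ ‖y x‖ / ‖y‖ := h1
      _ = ‖y x‖ / sSup {s : ℝ | ∃ z : X, N z ≤ 1 ∧ s = ‖y z‖} := by rw [hSy y hy]
      _ ≤ sSup R := le_csSup hRbdd' hmemR
    · push_neg at hD
      have hRe : R = ∅ := by
        ext r
        simp only [hR, Set.mem_setOf_eq, Set.mem_empty_iff_false, iff_false]
        rintro ⟨y, hy, hy0, _⟩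
        exact hy0 (hD y hy)
      have hSx : S x = {0} := by
        ext r
        simp only [hS, Set.mem_setOf_eq, Set.mem_singleton_iff]
        constructor
        · rintro ⟨y, hy, _, rfl⟩
          rw [hD y hy]
          simp
        · rintro rfl
          exact h0S x
      rw [hRe, Real.sSup_empty, hN]
      rw [show {r : ℝ | ∃ y ∈ Dstar, ‖y‖ ≤ 1 ∧ r = ‖y x‖} = S x from rfl, hSx]
      exact csSup_singleton 0
  exact ⟨fun x => ⟨hNle x, hkey x⟩, hadd, hsmul, hzero, hlast⟩
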